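/- arXiv:2107.05128 — 9 statements merged into one kernel-verified Lean document; each statement's English description precedes it below -/
import Mathlib

section
/- For any n ≥ 1 and any string α ∈ {0,u,1}^n of selector values, the string αα' ∈ {0,u,1}^{n+2^n}, where α' ∈ {u,1}^{2^n} has 1s exactly at positions indexed by resolutions of α and u elsewhere, is a prime implicant of MUX_n; moreover it is the unique prime implicant of MUX_n whose selector part equals α. -/
/-- Ternary values: `none` is the unstable value `u`. -/
abbrev TVal := Option Bool

/-- `a` is a resolution of `α`: it agrees with `α` on all stable coordinates. -/
def isRes {ι : Type*} (α : ι → TVal) (a : ι → Bool) : Prop :=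
  ∀ i b, α i = some b → a i = b

/-- The hazard-free extension of a Boolean function. -/
noncomputable def hfe {ι : Type*} (f : (ι → Bool) → Bool) (α : ι → TVal) : TVal := by
  classical
  exact if ∀ a, isRes α a → f a = true then some true
    else if ∀ a, isRes α a → f a = false then some false
    else none

/-- `β` is below `α` in the instability partial order (coordinatewise `u ≤ 0`, `u ≤ 1`). -/
def below {ι : Type*} (β α : ι → TVal) : Prop := ∀ i, β i = none ∨ β i = α i

/-- A prime implicant: an implicant minimal in the instability order. -/
def primeImplicant {ι : Type*} (f : (ι → Bool) → Bool) (α : ι → TVal) : Prop :=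
  hfe f α = some true ∧ ∀ β, below β α → hfe f β = some true → β = α

/-- A prime implicate: an implicate minimal in the instability order. -/
def primeImplicate {ι : Type*} (f : (ι → Bool) → Bool) (α : ι → TVal) : Prop :=
  hfe f α = some false ∧ ∀ β, below β α → hfe f β = some false → β = α

/-- The multiplexer function: data bits are indexed directly by selector strings. -/
def MUX (n : ℕ) (v : (Fin n ⊕ (Fin n → Bool)) → Bool) : Bool :=
  v (Sum.inr fun i => v (Sum.inl i))

/-- The extension of a selector string `α` by `1`s on the resolutions of `α`
and `u`s elsewhere. -/
noncomputable def muxPI (n : ℕ) (α : Fin n → TVal) : (Fin n ⊕ (Fin n → Bool)) → TVal := by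
  classical
  exact Sum.elim α fun a => if isRes α a then some true else none

/-- The extension of a selector string `α` by `0`s on the resolutions of `α`
and `u`s elsewhere. -/
noncomputable def muxPIm (n : ℕ) (α : Fin n → TVal) : (Fin n ⊕ (Fin n → Bool)) → TVal := by
  classical
  exact Sum.elim α fun a => if isRes α a then some false else none

lemma hfe_true_iff {ι : Type*} {f : (ι → Bool) → Bool} {β : ι → TVal} :
    hfe f β = some true ↔ ∀ a, isRes β a → f a = true := by
  classical
  unfold hfe
  split_ifs with h1 h2 <;> simp_all

theorem stmt2 (n : ℕ) (hn : 1 ≤ n) (α : Fin n → TVal) :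
    primeImplicant (MUX n) (muxPI n α) ∧
    ∀ γ, primeImplicant (MUX n) γ → (∀ i, γ (Sum.inl i) = α i) → γ = muxPI n α := by
  classical
  have hPIimp : hfe (MUX n) (muxPI n α) = some true := by
    rw [hfe_true_iff]
    intro w hw
    have hsel : isRes α (fun i => w (Sum.inl i)) := by
      intro i b hb
      exact hw (Sum.inl i) b (by simp [muxPI, hb])
    have := hw (Sum.inr fun i => w (Sum.inl i)) true (by simp [muxPI, hsel])
    simpa [MUX] using this
  have hmin : ∀ β, below β (muxPI n α) → hfe (MUX n) β = some true → β = muxPI n α := by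
    intro β hb himp
    rw [hfe_true_iff] at himp
    funext p
    cases p with
    | inl j =>
      rcases hb (Sum.inl j) with h0 | h0
      · cases hα : α j with
        | none => simp [muxPI, h0, hα]
        | some b =>
          exfalso
          set s : Fin n → Bool := fun k => if k = j then !b else (β (Sum.inl k)).getD true with hs
          have hsres : ¬ isRes α s := by
            intro h
            have := h j b hα
            simp [hs] at this
          have hβs : β (Sum.inr s) = none := by
            rcases hb (Sum.inr s) with h | h
            · exact h
            · rw [h]; simp [muxPI, hsres]
          set w : (Fin n ⊕ (Fin n → Bool)) → Bool :=
            Sum.elim s (fun c => if c = s then false else (β (Sum.inr c)).getD true) with hw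
          have hwres : isRes β w := by
            intro p d hp
            cases p with
            | inl k =>
              by_cases hk : k = j
              · subst hk; rw [h0] at hp; cases hp
              · simp [hw, hs, hk, hp]
            | inr c =>
              by_cases hc : c = s
              · subst hc; rw [hβs] at hp; cases hp
              · simp [hw, hc, hp]
          have hT := himp w hwres
          have hwinl : (fun i => w (Sum.inl i)) = s := by funext i; simp [hw]
          rw [MUX, hwinl] at hT
          simp [hw] at hT
      · exact h0
    | inr a =>
      rcases hb (Sum.inr a) with h0 | h0
      · by_cases ha : isRes α a
        · exfalso
          set w : (Fin n ⊕ (Fin n → Bool)) → Bool :=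
            Sum.elim a (fun c => if c = a then false else (β (Sum.inr c)).getD true) with hw
          have hwres : isRes β w := by
            intro p d hp
            cases p with
            | inl k =>
              rcases hb (Sum.inl k) with h | h
              · rw [h] at hp; cases hp
              · rw [h] at hp
                simp only [muxPI, Sum.elim_inl] at hp
                simpa [hw] using ha k d hp
            | inr c =>
              by_cases hc : c = a
              · subst hc; rw [h0] at hp; cases hp
              · simp [hw, hc, hp]
          have hT := himp w hwres
          have hwinl : (fun i => w (Sum.inl i)) = a := by funext i; simp [hw]
          rw [MUX, hwinl] at hT
          simp [hw] at hT
        · simp [muxPI, h0, ha]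
      · exact h0
  refine ⟨⟨hPIimp, hmin⟩, ?_⟩
  intro γ hγ hsel
  obtain ⟨hγimp, hγmin⟩ := hγ
  have himp := hfe_true_iff.mp hγimp
  funext p
  cases p with
  | inl j => simp [muxPI, hsel j]
  | inr a =>
    by_cases ha : isRes α a
    · simp only [muxPI, Sum.elim_inr, if_pos ha]
      by_contra hne
      set w : (Fin n ⊕ (Fin n → Bool)) → Bool :=
        Sum.elim a (fun c => if c = a then false else (γ (Sum.inr c)).getD true) with hw
      have hwres : isRes γ w := by
        intro p d hp
        cases p with
        | inl k =>
          rw [hsel k] at hp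
          simpa [hw] using ha k d hp
        | inr c =>
          by_cases hc : c = a
          · subst hc
            have hd : d = false := by
              cases d
              · rfl
              · exact absurd hp hne
            simp [hw, hd]
          · simp [hw, hc, hp]
      have hT := himp w hwres
      have hwinl : (fun i => w (Sum.inl i)) = a := by funext i; simp [hw]
      rw [MUX, hwinl] at hT
      simp [hw] at hT
    · simp only [muxPI, Sum.elim_inr, if_neg ha]
      by_contra hne
      obtain ⟨c, hc⟩ : ∃ c, γ (Sum.inr a) = some c := by
        cases h : γ (Sum.inr a) with
        | none => exact absurd h hne
        | some c => exact ⟨c, rfl⟩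
      set β := Function.update γ (Sum.inr a) none with hβ
      have hbel : below β γ := by
        intro p
        by_cases hp : p = Sum.inr a
        · subst hp; left; simp [hβ]
        · right; simp [hβ, Function.update_of_ne hp]
      have hβimp : hfe (MUX n) β = some true := by
        rw [hfe_true_iff]
        intro w hwres
        have hselres : isRes α (fun i => w (Sum.inl i)) := by
          intro i b hb
          apply hwres (Sum.inl i)
          rw [hβ, Function.update_of_ne (by simp), hsel i, hb]
        have hne' : (fun i => w (Sum.inl i)) ≠ a := fun h => ha (h ▸ hselres)
        set w' := Function.update w (Sum.inr a) c with hw'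
        have hw'res : isRes γ w' := by
          intro p d hp
          by_cases hpa : p = Sum.inr a
          · subst hpa
            rw [hc] at hp
            injection hp with hp
            simp [hw', hp]
          · rw [hw', Function.update_of_ne hpa]
            exact hwres p d (by rw [hβ, Function.update_of_ne hpa]; exact hp)
        have h1 := himp w' hw'res
        have hw'inl : (fun i => w' (Sum.inl i)) = fun i => w (Sum.inl i) := by
          funext i; rw [hw', Function.update_of_ne (by simp)]
        rw [MUX, hw'inl] at h1
        rw [hw', Function.update_of_ne (by simpa using hne')] at h1
        rw [MUX]
        exact h1
      have heq := hγmin β hbel hβimp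
      have : γ (Sum.inr a) = none := by
        rw [← heq, hβ]; simp
      exact hne this
end

section
/- For any n ≥ 1 and any α ∈ {0,u,1}^n, the string αβ' ∈ {0,u,1}^{n+2^n}, where β' ∈ {0,u}^{2^n} has 0s exactly at positions indexed by resolutions of α and u elsewhere, is the unique prime implicate of MUX_n whose selector part equals α. -/
def canonRes {ι : Type*} (α : ι → TVal) : ι → Bool := fun i => (α i).getD false

lemma canonRes_isRes {ι : Type*} (α : ι → TVal) : isRes α (canonRes α) := by
  intro i b h; simp [canonRes, h]

lemma hfe_false_iff {ι : Type*} (f : (ι → Bool) → Bool) (α : ι → TVal) :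
    hfe f α = some false ↔ ∀ a, isRes α a → f a = false := by
  classical
  unfold hfe
  split_ifs with h1 h2
  · constructor
    · intro h; simp at h
    · intro h
      have := h _ (canonRes_isRes α)
      have := h1 _ (canonRes_isRes α)
      simp_all
  · exact iff_of_true rfl h2
  · constructor
    · intro h; simp at h
    · intro h; exact absurd h h2

lemma mux_implicate_data {n : ℕ} (β : (Fin n ⊕ (Fin n → Bool)) → TVal)
    (hβ : ∀ v, isRes β v → MUX n v = false)
    (s : Fin n → Bool) (hs : ∀ i b, β (Sum.inl i) = some b → s i = b) :
    β (Sum.inr s) = some false := by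
  classical
  by_contra h
  set v : (Fin n ⊕ (Fin n → Bool)) → Bool :=
    Sum.elim s (fun x => if x = s then true else (β (Sum.inr x)).getD false) with hv
  have hres : isRes β v := by
    rintro (i | x) b hb
    · exact hs i b hb
    · simp only [hv, Sum.elim_inr]
      split_ifs with hx
      · subst hx
        cases b
        · exact absurd hb h
        · rfl
      · rw [hb]; rfl
  have h1 := hβ v hres
  have hsel : (fun i => v (Sum.inl i)) = s := rfl
  simp only [MUX, hsel, hv, Sum.elim_inr, if_pos rfl] at h1
  simp at h1

lemma hfe_muxPIm (n : ℕ) (α : Fin n → TVal) : hfe (MUX n) (muxPIm n α) = some false := by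
  rw [hfe_false_iff]
  intro v hv
  have hs : isRes α fun i => v (Sum.inl i) := by
    intro i b hb
    exact hv (Sum.inl i) b (by simpa [muxPIm] using hb)
  have := hv (Sum.inr fun i => v (Sum.inl i)) false (by simp [muxPIm, hs])
  simpa [MUX] using this

theorem stmt3 (n : ℕ) (hn : 1 ≤ n) (α : Fin n → TVal) :
    primeImplicate (MUX n) (muxPIm n α) ∧
    ∀ γ, primeImplicate (MUX n) γ → (∀ i, γ (Sum.inl i) = α i) → γ = muxPIm n α := by
  classical
  constructor
  · refine ⟨hfe_muxPIm n α, ?_⟩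
    intro β hb hβ
    have himp : ∀ v, isRes β v → MUX n v = false := (hfe_false_iff _ _).mp hβ
    funext i
    rcases hb i with h | h
    · -- β i = none
      rcases i with j | a
      · -- selector coordinate
        rcases hα : α j with _ | b
        · rw [h]; simp [muxPIm, hα]
        · exfalso
          set s : Fin n → Bool := Function.update (canonRes fun k => β (Sum.inl k)) j (!b) with hsdef
          have hs : ∀ k b', β (Sum.inl k) = some b' → s k = b' := by
            intro k b' hk
            by_cases hkj : k = j
            · subst hkj; rw [h] at hk; cases hk
            · simp [hsdef, Function.update_of_ne hkj, canonRes, hk]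
          have hdata := mux_implicate_data β himp s hs
          have hnotres : ¬ isRes α s := by
            intro hr
            have := hr j b hα
            simp [hsdef, Function.update_self] at this
          rcases hb (Sum.inr s) with h' | h'
          · rw [h'] at hdata; cases hdata
          · rw [h'] at hdata; simp [muxPIm, hnotres] at hdata
      · -- data coordinate
        by_cases hr : isRes α a
        · exfalso
          have hs : ∀ k b', β (Sum.inl k) = some b' → a k = b' := by
            intro k b' hk
            rcases hb (Sum.inl k) with h' | h'
            · rw [h'] at hk; cases hk
            · rw [h'] at hk; exact hr k b' (by simpa [muxPIm] using hk)
          have := mux_implicate_data β himp a hs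
          rw [h] at this; cases this
        · rw [h]; simp [muxPIm, hr]
    · exact h
  · intro γ hγ hsel
    have himp : ∀ v, isRes γ v → MUX n v = false := (hfe_false_iff _ _).mp hγ.1
    have hbelow : below (muxPIm n α) γ := by
      rintro (j | a)
      · right; simp [muxPIm, hsel j]
      · by_cases hr : isRes α a
        · right
          have hs : ∀ k b', γ (Sum.inl k) = some b' → a k = b' := by
            intro k b' hk
            exact hr k b' (by rw [← hsel k]; exact hk)
          have := mux_implicate_data γ himp a hs
          simp [muxPIm, hr, this]
        · left; simp [muxPIm, hr]
    exact (hγ.2 _ hbelow (hfe_muxPIm n α)).symm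
end

section
/- The number of prime implicants of MUX_n equals 3^n, and likewise the number of prime implicates of MUX_n equals 3^n. -/
/-- Unified extension: value `c` on resolutions of `α`, `u` elsewhere. -/
noncomputable def muxE (n : ℕ) (c : Bool) (α : Fin n → TVal) :
    (Fin n ⊕ (Fin n → Bool)) → TVal := by
  classical
  exact Sum.elim α fun a => if isRes α a then some c else none

lemma muxE_inl {n : ℕ} {c : Bool} {α : Fin n → TVal} (i : Fin n) :
    muxE n c α (Sum.inl i) = α i := rfl

lemma muxE_inr_pos {n : ℕ} {c : Bool} {α : Fin n → TVal} {a : Fin n → Bool}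
    (h : isRes α a) : muxE n c α (Sum.inr a) = some c := by
  simp [muxE, h]

lemma muxE_inr_neg {n : ℕ} {c : Bool} {α : Fin n → TVal} {a : Fin n → Bool}
    (h : ¬ isRes α a) : muxE n c α (Sum.inr a) = none := by
  simp [muxE, h]

lemma isRes_getD {ι : Type*} (β : ι → TVal) :
    isRes β (fun i => (β i).getD false) := fun i b h => by simp [h]

lemma hfe_eq_some {ι : Type*} (f : (ι → Bool) → Bool) (β : ι → TVal) (c : Bool) :
    hfe f β = some c ↔ ∀ a, isRes β a → f a = c := by
  unfold hfe
  split_ifs with h1 h2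
  · cases c
    · refine iff_of_false (by simp) (fun h => ?_)
      have := h _ (isRes_getD β)
      have := h1 _ (isRes_getD β)
      simp_all
    · exact iff_of_true rfl h1
  · cases c
    · exact iff_of_true rfl h2
    · refine iff_of_false (by simp) (fun h => ?_)
      have := h _ (isRes_getD β)
      have := h2 _ (isRes_getD β)
      simp_all
  · refine iff_of_false (by simp) (fun h => ?_)
    cases c
    · exact h2 h
    · exact h1 h

lemma hfe_muxE (n : ℕ) (c : Bool) (α : Fin n → TVal) :
    hfe (MUX n) (muxE n c α) = some c := by
  rw [hfe_eq_some]
  intro v hv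
  have hres : isRes α (fun i => v (Sum.inl i)) := by
    intro i b hb
    exact hv (Sum.inl i) b hb
  exact hv (Sum.inr (fun i => v (Sum.inl i))) c (muxE_inr_pos hres)

lemma mux_contra {n : ℕ} {c : Bool} {β : (Fin n ⊕ (Fin n → Bool)) → TVal}
    (hfeβ : hfe (MUX n) β = some c) (a : Fin n → Bool)
    (hsel : ∀ i b, β (Sum.inl i) = some b → a i = b)
    (hdata : β (Sum.inr a) = none) : False := by
  have hres : isRes β (Sum.elim a
      (fun x => if x = a then !c else (β (Sum.inr x)).getD false)) := by
    rintro (i | x) b hb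
    · exact hsel i b hb
    · show (if x = a then !c else (β (Sum.inr x)).getD false) = b
      split_ifs with hx
      · subst hx; rw [hdata] at hb; cases hb
      · simp [hb]
  have h := (hfe_eq_some _ _ _).mp hfeβ _ hres
  have h3 : (if a = a then !c else (β (Sum.inr a)).getD false) = c := h
  rw [if_pos rfl] at h3
  simp at h3

lemma prime_mux_iff (n : ℕ) (c : Bool) (γ : (Fin n ⊕ (Fin n → Bool)) → TVal) :
    (hfe (MUX n) γ = some c ∧ ∀ β, below β γ → hfe (MUX n) β = some c → β = γ)
    ↔ ∃ α, γ = muxE n c α := by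
  constructor
  · rintro ⟨h1, h2⟩
    refine ⟨fun i => γ (Sum.inl i), ?_⟩
    have hC : ∀ a, isRes (fun i => γ (Sum.inl i)) a → γ (Sum.inr a) = some c := by
      intro a ha
      by_contra hne
      have hres : isRes γ (Sum.elim a
          (fun x => if x = a then !c else (γ (Sum.inr x)).getD false)) := by
        rintro (i | x) b hb
        · exact ha i b hb
        · show (if x = a then !c else (γ (Sum.inr x)).getD false) = b
          split_ifs with hx
          · subst hx
            rw [hb] at hne
            cases b <;> cases c <;> simp_all
          · simp [hb]
      have h := (hfe_eq_some _ _ _).mp h1 _ hres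
      have h3 : (if a = a then !c else (γ (Sum.inr a)).getD false) = c := h
      rw [if_pos rfl] at h3
      simp at h3
    have hbelow : below (muxE n c (fun i => γ (Sum.inl i))) γ := by
      rintro (i | a)
      · right; rfl
      · by_cases ha : isRes (fun i => γ (Sum.inl i)) a
        · right; rw [muxE_inr_pos ha, hC a ha]
        · left; exact muxE_inr_neg ha
    exact (h2 _ hbelow (hfe_muxE n c _)).symm
  · rintro ⟨α, rfl⟩
    refine ⟨hfe_muxE n c α, fun β hb hfeβ => ?_⟩
    have F3 : ∀ a, ¬ isRes α a → β (Sum.inr a) = none := by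
      intro a ha
      rcases hb (Sum.inr a) with h | h
      · exact h
      · rw [h, muxE_inr_neg ha]
    have F1 : ∀ i, β (Sum.inl i) = α i := by
      intro i
      rcases hb (Sum.inl i) with h | h
      · cases hα : α i with
        | none => simp [h, hα]
        | some b =>
          exfalso
          set a : Fin n → Bool := fun j => if j = i then !b else (α j).getD false with hadef
          have hnres : ¬ isRes α a := by
            intro hr
            have := hr i b hα
            simp [hadef] at this
          refine mux_contra hfeβ a (fun j bc hj => ?_) (F3 a hnres)
          have hαj : α j = some bc := by
            rcases hb (Sum.inl j) with h' | h'
            · rw [h'] at hj; cases hj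
            · rw [h', muxE_inl] at hj; exact hj
          have hji : j ≠ i := by
            rintro rfl; rw [hj] at h; cases h
          simp [hadef, hji, hαj]
      · exact h
    have F2 : ∀ a, isRes α a → β (Sum.inr a) = some c := by
      intro a ha
      rcases hb (Sum.inr a) with h | h
      · exfalso
        refine mux_contra hfeβ a (fun j bc hj => ?_) h
        rw [F1 j] at hj
        exact ha j bc hj
      · rw [h, muxE_inr_pos ha]
    funext x
    rcases x with i | a
    · rw [F1 i, muxE_inl]
    · by_cases ha : isRes α a
      · rw [F2 a ha, muxE_inr_pos ha]
      · rw [F3 a ha, muxE_inr_neg ha]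

lemma card_aux {n : ℕ} {c : Bool} (P : ((Fin n ⊕ (Fin n → Bool)) → TVal) → Prop)
    (hP : ∀ γ, P γ ↔ ∃ α, γ = muxE n c α) :
    Nat.card {γ // P γ} = 3 ^ n := by
  have e : {γ // P γ} ≃ (Fin n → TVal) :=
    { toFun := fun γ => fun i => γ.1 (Sum.inl i)
      invFun := fun α => ⟨muxE n c α, (hP _).mpr ⟨α, rfl⟩⟩
      left_inv := by
        rintro ⟨γ, hγ⟩
        obtain ⟨α, rfl⟩ := (hP _).mp hγ
        exact Subtype.ext rfl
      right_inv := fun α => rfl }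
  rw [Nat.card_congr e, Nat.card_eq_fintype_card]
  simp [Fintype.card_fun]

theorem stmt4 (n : ℕ) :
    Nat.card {γ : (Fin n ⊕ (Fin n → Bool)) → TVal // primeImplicant (MUX n) γ} = 3 ^ n ∧
    Nat.card {γ : (Fin n ⊕ (Fin n → Bool)) → TVal // primeImplicate (MUX n) γ} = 3 ^ n := by
  constructor
  · exact card_aux (primeImplicant (MUX n)) (fun γ => prime_mux_iff n true γ)
  · exact card_aux (primeImplicate (MUX n)) (fun γ => prime_mux_iff n false γ)
end

section
/- The 3^n × 3^n real 0/1 matrix of the subcube-intersection function on {0,u,1}^n has full rank, i.e., rank 3^n over the reals, for all n ≥ 1. -/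
/-- The communication matrix of the subcube-intersection problem:
entry `1` iff `α` and `β` have a common resolution. -/
noncomputable def subMat (n : ℕ) : Matrix (Fin n → TVal) (Fin n → TVal) ℝ := by
  classical
  exact fun α β => if ∃ a, isRes α a ∧ isRes β a then 1 else 0

/-- The 3×3 matrix `[[1,1,0],[1,1,1],[0,1,1]]`, rows/columns indexed by `0, u, 1`. -/
def M1 : Matrix TVal TVal ℝ := fun t u =>
  match t, u with
  | some true, some false => 0
  | some false, some true => 0
  | _, _ => 1

/-- Explicit inverse of `M1`. -/
def N1 : Matrix TVal TVal ℝ := fun t u =>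
  match t, u with
  | some false, some false => 0
  | some false, none => 1
  | some false, some true => -1
  | none, some false => 1
  | none, none => -1
  | none, some true => 1
  | some true, some false => -1
  | some true, none => 1
  | some true, some true => 0

lemma M1_mul_N1 (x y : TVal) : ∑ t : TVal, M1 x t * N1 t y = if x = y then 1 else 0 := by
  rcases x with _ | (_|_) <;> rcases y with _ | (_|_) <;>
    simp [Fintype.sum_option, M1, N1]

lemma subMat_eq_prod (n : ℕ) (α β : Fin n → TVal) :
    subMat n α β = ∏ i, M1 (α i) (β i) := by
  classical
  unfold subMat
  split_ifs with h
  · obtain ⟨a, ha, hb⟩ := h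
    symm
    apply Finset.prod_eq_one
    intro i _
    have hai := ha i
    have hbi := hb i
    rcases hα : α i with _ | c <;> rcases hβ : β i with _ | d
    · simp [M1]
    · cases d <;> simp [M1]
    · cases c <;> simp [M1]
    · have h1 := hai _ hα
      have h2 := hbi _ hβ
      cases c <;> cases d <;> simp_all [M1]
  · symm
    push_neg at h
    classical
    set a : Fin n → Bool := fun i =>
      match α i with
      | some b => b
      | none => match β i with
        | some b => b
        | none => false with ha_def
    have hares : isRes α a := by
      intro i b hb
      simp [ha_def, hb]
    have := h a hares
    -- some coordinate of β is violated
    have : ∃ i b, β i = some b ∧ a i ≠ b := by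
      by_contra hc
      push_neg at hc
      exact this fun i b hb => hc i b hb
    obtain ⟨i, b, hβi, hne⟩ := this
    apply Finset.prod_eq_zero (Finset.mem_univ i)
    rcases hαi : α i with _ | c
    · exfalso; apply hne; simp [ha_def, hαi, hβi]
    · have hac : a i = c := by simp [ha_def, hαi]
      rw [hβi]
      cases b <;> cases c <;> simp_all [M1]

lemma subMat_mul_inv (n : ℕ) :
    subMat n * (Matrix.of fun α β : Fin n → TVal => ∏ i, N1 (α i) (β i)) = 1 := by
  classical
  ext α β
  simp only [Matrix.mul_apply, Matrix.of_apply, subMat_eq_prod]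
  have : ∀ γ : Fin n → TVal,
      (∏ i, M1 (α i) (γ i)) * ∏ i, N1 (γ i) (β i)
        = ∏ i, (M1 (α i) (γ i) * N1 (γ i) (β i)) := by
    intro γ; rw [Finset.prod_mul_distrib]
  simp_rw [this]
  rw [show (∑ x : Fin n → TVal, ∏ i, M1 (α i) (x i) * N1 (x i) (β i))
      = ∏ i, ∑ t : TVal, M1 (α i) t * N1 t (β i) from (Fintype.prod_sum (κ := fun _ : Fin n => TVal) (fun i t => M1 (α i) t * N1 t (β i))).symm]
  simp_rw [M1_mul_N1]
  rw [Matrix.one_apply]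
  by_cases h : α = β
  · simp [h]
  · simp only [h, if_false]
    obtain ⟨i, hi⟩ := Function.ne_iff.mp h
    exact Finset.prod_eq_zero (Finset.mem_univ i) (by simp [hi])

theorem stmt6 (n : ℕ) (hn : 1 ≤ n) : (subMat n).rank = 3 ^ n := by
  classical
  have hunit : IsUnit (subMat n) := by
    have h := subMat_mul_inv n
    exact (Matrix.isUnit_iff_isUnit_det _).mpr (Matrix.isUnit_det_of_right_inverse h)
  rw [Matrix.rank_of_isUnit _ hunit]
  simp [Fintype.card_fun]
end

section
/- If α, β ∈ {0,u,1}^n have a common resolution, α' ∈ {u,1}^{2^n} has 1s exactly at positions indexed by resolutions of α, and β' ∈ {0,u}^{2^n} has 0s exactly at positions indexed by resolutions of β, then every coordinate i of αα' and ββ' at which both strings are stable and disagree lies among the data positions (i.e., i > n); conversely if α and β have no common resolution, then every such coordinate lies among the selector positions (i ≤ n). -/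
theorem stmt8 (n : ℕ) (α β : Fin n → TVal) :
    ((∃ a, isRes α a ∧ isRes β a) →
      ∀ i b c, muxPI n α i = some b → muxPIm n β i = some c → b ≠ c →
        ∃ j, i = Sum.inr j) ∧
    ((¬ ∃ a, isRes α a ∧ isRes β a) →
      ∀ i b c, muxPI n α i = some b → muxPIm n β i = some c → b ≠ c →
        ∃ j, i = Sum.inl j) := by
  constructor
  · rintro ⟨a, ha, hb⟩ (j | j) b c h1 h2 hbc
    · simp only [muxPI, muxPIm, Sum.elim_inl] at h1 h2
      exact absurd ((ha j b h1).symm.trans (hb j c h2)) hbc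
    · exact ⟨j, rfl⟩
  · rintro h (j | j) b c h1 h2 hbc
    · exact ⟨j, rfl⟩
    · simp only [muxPI, muxPIm, Sum.elim_inr] at h1 h2
      split at h1
      · split at h2
        · exact absurd ⟨j, ‹_›, ‹_›⟩ h
        · simp at h2
      · simp at h1
end

section
/- Let f be a monotone Boolean function on {0,1}^n. Then every prime implicant of f (with respect to the hazard-free extension) contains only values from {u,1}, and every prime implicate contains only values from {u,0}. -/
lemma hfe_true {ι : Type*} (f : (ι → Bool) → Bool) (α : ι → TVal)
    (h : ∀ a, isRes α a → f a = true) : hfe f α = some true := by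
  unfold hfe; rw [if_pos h]

lemma hfe_false {ι : Type*} (f : (ι → Bool) → Bool) (α : ι → TVal)
    (h : ∀ a, isRes α a → f a = false) : hfe f α = some false := by
  unfold hfe
  rw [if_neg, if_pos h]
  intro hall
  classical
  obtain ⟨a, ha⟩ : ∃ a, isRes α a := ⟨fun i => (α i).getD true, fun i b hb => by simp [hb]⟩
  have := hall a ha
  have := h a ha
  simp_all

lemma hfe_all_true {ι : Type*} (f : (ι → Bool) → Bool) (α : ι → TVal)
    (h : hfe f α = some true) : ∀ a, isRes α a → f a = true := by
  by_contra hc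
  unfold hfe at h
  rw [if_neg hc] at h
  split at h <;> simp_all

lemma hfe_all_false {ι : Type*} (f : (ι → Bool) → Bool) (α : ι → TVal)
    (h : hfe f α = some false) : ∀ a, isRes α a → f a = false := by
  by_contra hc
  unfold hfe at h
  rw [if_neg hc] at h
  split at h <;> simp_all

theorem stmt9 {n : ℕ} (f : (Fin n → Bool) → Bool)
    (hf : ∀ a b : Fin n → Bool, (∀ i, a i ≤ b i) → f a ≤ f b) :
    (∀ α, primeImplicant f α → ∀ i, α i ≠ some false) ∧
    (∀ β, primeImplicate f β → ∀ i, β i ≠ some true) := by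
  classical
  constructor
  · rintro α ⟨h1, h2⟩ i hi
    set β := Function.update α i none with hβ
    have hb : below β α := by
      intro j
      by_cases hj : j = i
      · subst hj; left; simp [hβ]
      · right; simp [hβ, Function.update_of_ne hj]
    have hβt : hfe f β = some true := by
      apply hfe_true
      intro a ha
      have ha' : isRes α (Function.update a i false) := by
        intro j b hjb
        by_cases hj : j = i
        · subst hj; rw [hi] at hjb; simp_all
        · rw [Function.update_of_ne hj]
          exact ha j b (by rw [hβ, Function.update_of_ne hj]; exact hjb)
      have hle : ∀ j, Function.update a i false j ≤ a j := by
        intro j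
        by_cases hj : j = i
        · subst hj; simp
        · rw [Function.update_of_ne hj]
      have := hf _ _ hle
      rw [hfe_all_true f α h1 _ ha'] at this
      exact le_antisymm (by simp) this
    have := h2 β hb hβt
    have : β i = α i := by rw [this]
    simp [hβ, hi] at this
  · rintro α ⟨h1, h2⟩ i hi
    set β := Function.update α i none with hβ
    have hb : below β α := by
      intro j
      by_cases hj : j = i
      · subst hj; left; simp [hβ]
      · right; simp [hβ, Function.update_of_ne hj]
    have hβt : hfe f β = some false := by
      apply hfe_false
      intro a ha
      have ha' : isRes α (Function.update a i true) := by
        intro j b hjb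
        by_cases hj : j = i
        · subst hj; rw [hi] at hjb; simp_all
        · rw [Function.update_of_ne hj]
          exact ha j b (by rw [hβ, Function.update_of_ne hj]; exact hjb)
      have hle : ∀ j, a j ≤ Function.update a i true j := by
        intro j
        by_cases hj : j = i
        · subst hj; simp
        · rw [Function.update_of_ne hj]
      have := hf _ _ hle
      rw [hfe_all_false f α h1 _ ha'] at this
      exact le_antisymm this (by simp)
    have := h2 β hb hβt
    have : β i = α i := by rw [this]
    simp [hβ, hi] at this
end

section
/- For all integers n ≥ 2, with t = ⌈log_2 n⌉ and Ψ(i) = ⌈log_2(2^i + n − i)⌉ − i, the inequality Σ_{i=0}^{t−1} C(n,i)·2^{Ψ(i)−1} + Σ_{i=t}^{n−1} C(n,i) + 1/2 ≤ 2^{n+1} holds. -/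
lemma clog2eq {n k : ℕ} (h1 : 2^k < 2*n) (h2 : n ≤ 2^k) : Nat.clog 2 n = k := by
  apply le_antisymm ((Nat.clog_le_iff_le_pow one_lt_two).mpr h2)
  rcases Nat.eq_zero_or_pos k with rfl | hk
  · exact Nat.zero_le _
  · have h3 : 2^(k-1) < n := by
      have : 2^k = 2 * 2^(k-1) := by
        rw [← pow_succ']
        congr 1; omega
      omega
    have := (Nat.lt_clog_iff_pow_lt one_lt_two).mpr h3
    omega

lemma chooseDouble {n i : ℕ} (h : 3*i+2 ≤ n) : 2 * n.choose i ≤ n.choose (i+1) := by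
  have key := Nat.choose_succ_right_eq n i
  have h1 : 2 * n.choose i * (i+1) ≤ n.choose i * (n - i) :=
    calc 2 * n.choose i * (i+1) = n.choose i * (2*i+2) := by ring
    _ ≤ n.choose i * (n - i) := Nat.mul_le_mul le_rfl (by omega)
  rw [← key] at h1
  exact Nat.le_of_mul_le_mul_right h1 (Nat.succ_pos i)

lemma chooseMonoStep {n j : ℕ} (h : 2*j+1 ≤ n) : n.choose j ≤ n.choose (j+1) := by
  have key := Nat.choose_succ_right_eq n j
  have h1 : n.choose j * (j+1) ≤ n.choose j * (n - j) := Nat.mul_le_mul le_rfl (by omega)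
  rw [← key] at h1
  exact Nat.le_of_mul_le_mul_right h1 (Nat.succ_pos j)

lemma chooseMonoFrom {n t : ℕ} : ∀ j, t ≤ j → 2*j ≤ n+1 → n.choose t ≤ n.choose j := by
  intro j
  induction j with
  | zero => intro h _; simp [Nat.le_zero.mp h]
  | succ j ih =>
    intro h1 h2
    rcases Nat.eq_or_lt_of_le h1 with h | h
    · rw [h]
    · exact le_trans (ih (by omega) (by omega)) (chooseMonoStep (by omega))

lemma chooseDoublePow {n t : ℕ} (ht : 3*t ≤ n+1) : ∀ d, d ≤ t → n.choose (t-d) * 2^d ≤ n.choose t := by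
  intro d
  induction d with
  | zero => simp
  | succ d ih =>
    intro hd
    have e1 : t - d = (t - (d+1)) + 1 := by omega
    calc n.choose (t-(d+1)) * 2^(d+1) = (2 * n.choose (t-(d+1))) * 2^d := by ring
    _ ≤ n.choose (t-d) * 2^d := Nat.mul_le_mul (e1 ▸ chooseDouble (by omega)) le_rfl
    _ ≤ n.choose t := ih (by omega)

lemma sumRangeChoose (n : ℕ) : ∑ i ∈ Finset.range n, n.choose i = 2^n - 1 := by
  have h := Nat.sum_range_choose n
  rw [Finset.sum_range_succ, Nat.choose_self] at h
  omega

lemma natSum {n t : ℕ} (ht : 4*t ≤ n+3) (ht2 : 2 ≤ t) :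
    ∑ i ∈ Finset.range t, n.choose i * 2^(t-i) ≤ 2^n - 1 := by
  have h1 : ∑ i ∈ Finset.range t, n.choose i * 2^(t-i) ≤ t * n.choose t := by
    have := Finset.sum_le_card_nsmul (Finset.range t) (fun i => n.choose i * 2^(t-i)) (n.choose t)
      (by
        intro i hi
        rw [Finset.mem_range] at hi
        have := chooseDoublePow (n := n) (t := t) (by omega) (t - i) (by omega)
        rwa [show t - (t - i) = i by omega] at this)
    simpa using this
  have h2 : t * n.choose t ≤ ∑ j ∈ Finset.Ico t (2*t), n.choose j := by
    have := Finset.card_nsmul_le_sum (Finset.Ico t (2*t)) (fun j => n.choose j) (n.choose t)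
      (by
        intro j hj
        rw [Finset.mem_Ico] at hj
        exact chooseMonoFrom j hj.1 (by omega))
    simp [Nat.card_Ico] at this
    rwa [show 2*t-t = t by omega] at this
  have h3 : ∑ j ∈ Finset.Ico t (2*t), n.choose j ≤ ∑ j ∈ Finset.range n, n.choose j := by
    apply Finset.sum_le_sum_of_subset
    intro j hj
    rw [Finset.mem_Ico] at hj
    rw [Finset.mem_range]
    omega
  rw [sumRangeChoose] at h3
  omega

lemma powAux : ∀ s : ℕ, 4*(s+5) ≤ 2^(s+4)+4 := by
  intro s
  induction s with
  | zero => norm_num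
  | succ s ih =>
    have h1 : (2:ℕ)^(s+1+4) = 2 * 2^(s+4) := by ring
    have h2 : (16:ℕ) ≤ 2^(s+4) :=
      calc (16:ℕ) = 2^4 := by norm_num
        _ ≤ 2^(s+4) := Nat.pow_le_pow_right (by norm_num) (by omega)
    omega

lemma clogBound {n : ℕ} (h : 13 ≤ n) : 4 * Nat.clog 2 n ≤ n + 3 := by
  by_cases h4 : Nat.clog 2 n ≤ 4
  · omega
  · have h5 : 5 ≤ Nat.clog 2 n := by omega
    have h6 : 2^(Nat.clog 2 n - 1) < n :=
      (Nat.lt_clog_iff_pow_lt one_lt_two).mp (by omega)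
    have := powAux (Nat.clog 2 n - 5)
    rw [show Nat.clog 2 n - 5 + 5 = Nat.clog 2 n by omega,
        show Nat.clog 2 n - 5 + 4 = Nat.clog 2 n - 1 by omega] at this
    omega

theorem stmt15 (n : ℕ) (hn : 2 ≤ n) :
    ∑ i ∈ Finset.range (Nat.clog 2 n), (n.choose i : ℚ) *
        (2 : ℚ) ^ ((Nat.clog 2 (2 ^ i + (n - i)) : ℤ) - i - 1) +
      ∑ i ∈ Finset.Ico (Nat.clog 2 n) n, (n.choose i : ℚ) + 1 / 2
      ≤ 2 ^ (n + 1) := by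
  rcases lt_or_ge n 13 with hsm | hbig
  · have c2 : Nat.clog 2 2 = 1 := clog2eq (by norm_num) (by norm_num)
    have c3 : Nat.clog 2 3 = 2 := clog2eq (by norm_num) (by norm_num)
    have c4 : Nat.clog 2 4 = 2 := clog2eq (by norm_num) (by norm_num)
    have c5 : Nat.clog 2 5 = 3 := clog2eq (by norm_num) (by norm_num)
    have c6 : Nat.clog 2 6 = 3 := clog2eq (by norm_num) (by norm_num)
    have c7 : Nat.clog 2 7 = 3 := clog2eq (by norm_num) (by norm_num)
    have c8 : Nat.clog 2 8 = 3 := clog2eq (by norm_num) (by norm_num)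
    have c9 : Nat.clog 2 9 = 4 := clog2eq (by norm_num) (by norm_num)
    have c10 : Nat.clog 2 10 = 4 := clog2eq (by norm_num) (by norm_num)
    have c11 : Nat.clog 2 11 = 4 := clog2eq (by norm_num) (by norm_num)
    have c12 : Nat.clog 2 12 = 4 := clog2eq (by norm_num) (by norm_num)
    have c13 : Nat.clog 2 13 = 4 := clog2eq (by norm_num) (by norm_num)
    have c14 : Nat.clog 2 14 = 4 := clog2eq (by norm_num) (by norm_num)
    have c15 : Nat.clog 2 15 = 4 := clog2eq (by norm_num) (by norm_num)
    have c16 : Nat.clog 2 16 = 4 := clog2eq (by norm_num) (by norm_num)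
    have c17 : Nat.clog 2 17 = 5 := clog2eq (by norm_num) (by norm_num)
    interval_cases n <;>
      norm_num [Nat.choose, c2, c3, c4, c5, c6, c7, c8, c9, c10, c11, c12, c13, c14,
        c15, c16, c17, Finset.sum_range_succ, Finset.sum_Ico_eq_sum_range]
  · set t := Nat.clog 2 n with ht
    have ht4 : 4 ≤ t := by
      have : (2:ℕ)^3 < n := by omega
      have := (Nat.lt_clog_iff_pow_lt one_lt_two).mpr this
      omega
    have hb : 4*t ≤ n+3 := clogBound hbig
    have hn2t : n ≤ 2^t := (Nat.clog_le_iff_le_pow one_lt_two).mp le_rfl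
    -- first sum bound
    have key1 : ∑ i ∈ Finset.range t, (n.choose i : ℚ) *
        (2 : ℚ) ^ ((Nat.clog 2 (2 ^ i + (n - i)) : ℤ) - i - 1)
        ≤ ((∑ i ∈ Finset.range t, n.choose i * 2^(t-i) : ℕ) : ℚ) := by
      rw [Nat.cast_sum]
      apply Finset.sum_le_sum
      intro i hi
      rw [Finset.mem_range] at hi
      have hi2 : 2^i < n := (Nat.lt_clog_iff_pow_lt one_lt_two).mp hi
      have harg : 2^i + (n - i) ≤ 2^(t+1) := by
        have : (2:ℕ)^(t+1) = 2 * 2^t := by ring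
        omega
      have hc : Nat.clog 2 (2^i + (n-i)) ≤ t+1 := (Nat.clog_le_iff_le_pow one_lt_two).mpr harg
      have hexp : (Nat.clog 2 (2 ^ i + (n - i)) : ℤ) - i - 1 ≤ ((t - i : ℕ) : ℤ) := by
        push_cast [Nat.cast_sub hi.le]
        omega
      have hz : (2:ℚ) ^ ((Nat.clog 2 (2 ^ i + (n - i)) : ℤ) - i - 1)
          ≤ ((2^(t-i) : ℕ) : ℚ) := by
        calc (2:ℚ) ^ ((Nat.clog 2 (2 ^ i + (n - i)) : ℤ) - i - 1)
            ≤ (2:ℚ) ^ (((t - i : ℕ)) : ℤ) := zpow_le_zpow_right₀ one_le_two hexp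
          _ = ((2^(t-i) : ℕ) : ℚ) := by push_cast [zpow_natCast]; ring
      push_cast
      calc (n.choose i : ℚ) * (2:ℚ) ^ ((Nat.clog 2 (2 ^ i + (n - i)) : ℤ) - i - 1)
          ≤ (n.choose i : ℚ) * ((2^(t-i) : ℕ) : ℚ) :=
            mul_le_mul_of_nonneg_left hz (by positivity)
        _ = (n.choose i : ℚ) * 2^(t-i) := by push_cast; ring
    have key1' : ((∑ i ∈ Finset.range t, n.choose i * 2^(t-i) : ℕ) : ℚ)
        ≤ ((2^n - 1 : ℕ) : ℚ) := Nat.cast_le.mpr (natSum hb (by omega))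
    -- second sum bound
    have key2 : ∑ i ∈ Finset.Ico t n, (n.choose i : ℚ) ≤ ((2^n - 1 : ℕ) : ℚ) := by
      rw [← Nat.cast_sum]
      apply Nat.cast_le.mpr
      calc ∑ i ∈ Finset.Ico t n, n.choose i ≤ ∑ i ∈ Finset.range n, n.choose i := by
            apply Finset.sum_le_sum_of_subset
            intro j hj
            rw [Finset.mem_Ico] at hj
            rw [Finset.mem_range]
            omega
        _ = 2^n - 1 := sumRangeChoose n
    have hcast : ((2^n - 1 : ℕ) : ℚ) = 2^n - 1 := by
      push_cast [Nat.cast_sub (Nat.one_le_two_pow)]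
      ring
    have hfin : (2:ℚ)^(n+1) = 2 * 2^n := by rw [pow_succ]; ring
    rw [hcast] at key1' key2
    have h1 : (1:ℚ) ≤ 2^n := by
      have : ((1:ℕ):ℚ) ≤ ((2^n : ℕ):ℚ) := Nat.cast_le.mpr Nat.one_le_two_pow
      push_cast at this
      exact this
    linarith [key1, key1', key2]
end

section
/- For all integers n ≥ 2, with Ψ(i) = ⌈log_2(2^i + n − i)⌉ − i, the inequality Σ_{i=0}^{n} C(n,i)·2^{n−i}·2^{Ψ(i)+i} > 2^{2n+1} holds; consequently, there is no prefix code assigning to each of the C(n,i)·2^{n−i} prime implicants with i selector u's a codeword of length at most (2n+1) − ⌈log_2(2^i + n − i)⌉, by Kraft's inequality. -/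
open Finset

private lemma count_noneset (n i : ℕ) :
    (univ.filter fun α : Fin n → Option Bool =>
      (univ.filter fun j => α j = none).card = i).card = n.choose i * 2 ^ (n - i) := by
  classical
  have key : ∀ y : Finset (Fin n), y.card = i →
      (univ.filter fun α : Fin n → Option Bool => (univ.filter fun j => α j = none) = y).card
        = 2 ^ (n - i) := by
    intro y hy
    have he : (univ.filter fun α : Fin n → Option Bool => (univ.filter fun j => α j = none) = y)
        = Fintype.piFinset (fun j => if j ∈ y then ({none} : Finset (Option Bool))
            else {some false, some true}) := by
      ext α
      simp only [mem_filter, mem_univ, true_and, Fintype.mem_piFinset]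
      constructor
      · intro h j
        by_cases hj : j ∈ y
        · simp only [hj, if_true, mem_singleton]
          have : j ∈ univ.filter fun j => α j = none := h ▸ hj
          simpa using this
        · simp only [hj, if_false, mem_insert, mem_singleton]
          have : j ∉ univ.filter fun j => α j = none := h ▸ hj
          simp only [mem_filter, mem_univ, true_and] at this
          rcases hb : α j with _ | b
          · exact absurd hb this
          · cases b <;> simp
      · intro h
        ext j
        simp only [mem_filter, mem_univ, true_and]
        have := h j
        by_cases hj : j ∈ y <;> simp [hj] at this ⊢
        · exact this
        · rcases this with h1 | h1 <;> simp [h1]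
    rw [he, Fintype.card_piFinset]
    have : ∀ j : Fin n, ((if j ∈ y then ({none} : Finset (Option Bool))
        else {some false, some true}).card) = if j ∈ y then 1 else 2 := by
      intro j; split <;> simp
    rw [Finset.prod_congr rfl fun j _ => this j, Finset.prod_ite, Finset.prod_const,
      Finset.prod_const, one_pow, one_mul]
    congr 1
    rw [Finset.filter_not, Finset.filter_mem_eq_inter, Finset.univ_inter,
      Finset.card_sdiff_of_subset (subset_univ _), Finset.card_univ, Fintype.card_fin, hy]
  have h1 := Finset.sum_fiberwise_of_maps_to (g := fun α : Fin n → Option Bool =>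
      (univ.filter fun j => α j = none))
      (s := univ.filter fun α : Fin n → Option Bool => (univ.filter fun j => α j = none).card = i)
      (t := Finset.powersetCard i univ)
      (fun α hα => by
        simp only [mem_filter] at hα
        simpa [Finset.mem_powersetCard_univ] using hα.2)
      (fun _ => (1 : ℕ))
  rw [← Finset.card_eq_sum_ones] at h1
  rw [← h1]
  have h2 : ∀ y ∈ Finset.powersetCard i (univ : Finset (Fin n)),
      (∑ α ∈ (univ.filter fun α : Fin n → Option Bool =>
          (univ.filter fun j => α j = none).card = i).filter
          (fun α => (univ.filter fun j => α j = none) = y), (1:ℕ)) = 2 ^ (n - i) := by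
    intro y hy
    rw [Finset.mem_powersetCard_univ] at hy
    rw [← Finset.card_eq_sum_ones, Finset.filter_filter]
    rw [← key y hy]
    congr 1
    apply Finset.filter_congr
    intro α _
    constructor
    · exact fun h => h.2
    · exact fun h => ⟨h ▸ hy, h⟩
  rw [Finset.sum_congr rfl h2, Finset.sum_const, Finset.card_powersetCard, Finset.card_univ,
    Fintype.card_fin, smul_eq_mul]

private lemma kraft_sum {β : Type*} [Fintype β] [DecidableEq β] (enc : β → List Bool) (L : ℕ)
    (hpf : ∀ α γ : β, α ≠ γ → ¬ (enc α <+: enc γ)) (hlen : ∀ α, (enc α).length ≤ L) :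
    ∑ α : β, 2 ^ (L - (enc α).length) ≤ 2 ^ L := by
  classical
  let Φ : (Σ α : β, (Fin (L - (enc α).length) → Bool)) → List.Vector Bool L :=
    fun x => ⟨enc x.1 ++ List.ofFn x.2, by
      simp [Nat.add_sub_cancel' (hlen x.1)]⟩
  have hinj : Function.Injective Φ := by
    rintro ⟨α, p⟩ ⟨γ, q⟩ h
    have h' : enc α ++ List.ofFn p = enc γ ++ List.ofFn q := congrArg Subtype.val h
    have hac : α = γ := by
      by_contra hne
      rcases List.prefix_or_prefix_of_prefix (List.prefix_append (enc α) (List.ofFn p))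
        (h' ▸ List.prefix_append (enc γ) (List.ofFn q)) with hp | hp
      · exact hpf α γ hne hp
      · exact hpf γ α (Ne.symm hne) hp
    subst hac
    have h2 : List.ofFn p = List.ofFn q := List.append_cancel_left h'
    have h3 : p = q := List.ofFn_injective h2
    subst h3
    rfl
  have hcard := Fintype.card_le_of_injective Φ hinj
  simpa [Fintype.card_sigma, Fintype.card_fun] using hcard

private lemma sum_lb (n : ℕ) (hn : 2 ≤ n) :
    2 ^ (2 * n + 1) + 2 ^ n ≤ ∑ i ∈ Finset.range (n + 1),
        n.choose i * 2 ^ (n - i) * 2 ^ (Nat.clog 2 (2 ^ i + (n - i))) := by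
  have hb : (1:ℕ) < 2 := one_lt_two
  have step1 : ∀ i ∈ Finset.range (n + 1),
      n.choose i * 2 ^ (n - i) * 2 ^ (if i = n then n else if i = 0 then 2 else i + 1)
        ≤ n.choose i * 2 ^ (n - i) * 2 ^ (Nat.clog 2 (2 ^ i + (n - i))) := by
    intro i hi
    rw [Finset.mem_range] at hi
    apply Nat.mul_le_mul_left
    apply Nat.pow_le_pow_right (by norm_num)
    by_cases h1 : i = n
    · subst h1
      rw [Nat.sub_self, add_zero, Nat.clog_pow _ _ hb]
      simp
    · have hin : i < n := lt_of_le_of_ne (Nat.lt_succ_iff.mp hi) h1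
      by_cases h0 : i = 0
      · subst h0
        simp only [if_neg h1, if_pos rfl, pow_zero, Nat.sub_zero]
        have h3 : 2 ^ 1 < 1 + n := by omega
        exact (Nat.lt_clog_iff_pow_lt hb).mpr h3
      · simp only [if_neg h1, if_neg h0]
        have h3 : 2 ^ i < 2 ^ i + (n - i) := by omega
        exact (Nat.lt_clog_iff_pow_lt hb).mpr h3
  refine le_trans (le_of_eq ?_) (Finset.sum_le_sum step1)
  rw [Finset.sum_range_succ]
  have hlast : n.choose n * 2 ^ (n - n) * 2 ^ (if n = n then n else if n = 0 then 2 else n + 1)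
      = 2 ^ n := by simp
  rw [hlast]
  have hmid : ∀ i ∈ Finset.range n,
      n.choose i * 2 ^ (n - i) * 2 ^ (if i = n then n else if i = 0 then 2 else i + 1)
        = n.choose i * 2 ^ (n + 1) + (if i = 0 then 2 ^ (n + 1) else 0) := by
    intro i hi
    rw [Finset.mem_range] at hi
    rw [if_neg hi.ne]
    by_cases h0 : i = 0
    · subst h0
      have h4 : (2:ℕ) ^ n * 2 ^ 2 = 2 ^ (n + 1) + 2 ^ (n + 1) := by
        rw [← pow_add, show n + 2 = (n + 1) + 1 from rfl, pow_succ]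
        ring
      simpa using h4
    · rw [if_neg h0, if_neg h0, add_zero, mul_assoc, ← pow_add]
      congr 2
      omega
  rw [Finset.sum_congr rfl hmid, Finset.sum_add_distrib, ← Finset.sum_mul,
    Finset.sum_ite_eq' (Finset.range n) 0 (fun _ => 2 ^ (n+1)),
    if_pos (Finset.mem_range.mpr (by omega))]
  have hchoose : ∑ i ∈ Finset.range n, n.choose i = 2 ^ n - 1 := by
    have h5 := Nat.sum_range_choose n
    rw [Finset.sum_range_succ, Nat.choose_self] at h5
    omega
  rw [hchoose]
  have hp : (1:ℕ) ≤ 2 ^ n := Nat.one_le_two_pow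
  have h6 : (2 ^ n - 1) * 2 ^ (n + 1) + 2 ^ (n + 1) = 2 ^ n * 2 ^ (n + 1) := by
    rw [Nat.sub_mul, one_mul]
    have : 2 ^ (n+1) ≤ 2 ^ n * 2 ^ (n + 1) := Nat.le_mul_of_pos_left _ (by positivity)
    omega
  have h7 : (2:ℕ) ^ n * 2 ^ (n + 1) = 2 ^ (2 * n + 1) := by
    rw [← pow_add]; congr 1; omega
  omega

theorem stmt16 (n : ℕ) (hn : 2 ≤ n) :
    (∑ i ∈ Finset.range (n + 1),
        n.choose i * 2 ^ (n - i) * 2 ^ (Nat.clog 2 (2 ^ i + (n - i)))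
      > 2 ^ (2 * n + 1)) ∧
    ¬ ∃ enc : (Fin n → TVal) → List Bool,
        (∀ α β : Fin n → TVal, α ≠ β → ¬ (enc α <+: enc β)) ∧
        ∀ α : Fin n → TVal,
          (enc α).length ≤ (2 * n + 1) -
            Nat.clog 2 (2 ^ ((Finset.univ.filter fun j : Fin n => α j = none).card)
              + (n - (Finset.univ.filter fun j : Fin n => α j = none).card)) := by
  classical
  have hpart1 := sum_lb n hn
  have hpos : 0 < 2 ^ n := Nat.pow_pos (by norm_num)
  constructor
  · omega
  · rintro ⟨enc, hpf, hlen⟩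
    set L := 2 * n + 1 with hL
    set ia : (Fin n → TVal) → ℕ := fun α => (Finset.univ.filter fun j : Fin n => α j = none).card
      with hia
    set c : (Fin n → TVal) → ℕ := fun α => Nat.clog 2 (2 ^ ia α + (n - ia α)) with hc
    have hialen : ∀ α, ia α ≤ n := by
      intro α
      calc ia α ≤ (univ : Finset (Fin n)).card := Finset.card_filter_le _ _
        _ = n := by simp
    have hcle : ∀ α, c α ≤ L := by
      intro α
      have h1 : 2 ^ ia α + (n - ia α) ≤ 2 ^ L := by
        have h2 : 2 ^ ia α ≤ 2 ^ n := Nat.pow_le_pow_right (by norm_num) (hialen α)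
        have h3 : n < 2 ^ n := Nat.lt_two_pow_self
        have h4 : (2:ℕ) ^ n + 2 ^ n ≤ 2 ^ L := by
          rw [← two_mul, ← pow_succ']
          exact Nat.pow_le_pow_right (by norm_num) (by omega)
        omega
      exact (Nat.clog_le_iff_le_pow one_lt_two).mpr h1
    have hclen : ∀ α, c α ≤ L - (enc α).length := by
      intro α
      have h1 := hlen α
      have h2 := hcle α
      have h3 : c α = Nat.clog 2 (2 ^ ((Finset.univ.filter fun j : Fin n => α j = none).card)
          + (n - (Finset.univ.filter fun j : Fin n => α j = none).card)) := rfl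
      omega
    -- Kraft
    have hlenle : ∀ α, (enc α).length ≤ L := by
      intro α
      have h1 := hlen α
      omega
    have hk : ∑ α : Fin n → TVal, 2 ^ (L - (enc α).length) ≤ 2 ^ L :=
      kraft_sum enc L hpf hlenle
    have hk2 : ∑ α : Fin n → TVal, 2 ^ c α ≤ 2 ^ L := by
      refine le_trans (Finset.sum_le_sum fun α _ => ?_) hk
      exact Nat.pow_le_pow_right (by norm_num) (hclen α)
    -- group the sum by number of u's
    have hgroup : ∑ α : Fin n → TVal, 2 ^ c α
        = ∑ i ∈ Finset.range (n + 1),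
            n.choose i * 2 ^ (n - i) * 2 ^ (Nat.clog 2 (2 ^ i + (n - i))) := by
      have h1 := Finset.sum_fiberwise_of_maps_to (g := ia) (s := (univ : Finset (Fin n → TVal)))
        (t := Finset.range (n + 1))
        (fun α _ => Finset.mem_range.mpr (Nat.lt_succ_of_le (hialen α)))
        (fun α => 2 ^ c α)
      rw [← h1]
      refine Finset.sum_congr rfl fun i hi => ?_
      have h2 : ∀ α ∈ univ.filter fun α : Fin n → TVal => ia α = i,
          2 ^ c α = 2 ^ (Nat.clog 2 (2 ^ i + (n - i))) := by
        intro α hα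
        rw [Finset.mem_filter] at hα
        rw [hc]
        simp only
        rw [hα.2]
      rw [Finset.sum_congr rfl h2, Finset.sum_const, smul_eq_mul]
      congr 1
      exact count_noneset n i
    rw [hgroup] at hk2
    omega
end

section
/- Fix any (s,x) ∈ {0,1}^{n+2^n}. The hazard derivative dMUX_n(s,x; t,y), viewed as a Boolean function of (t,y) ∈ {0,1}^{n+2^n}, is a monotone Boolean function: if (t,y) ≤ (t',y') coordinatewise and dMUX_n(s,x;t,y) = 1 then dMUX_n(s,x;t',y') = 1. -/
/-- `x ⊕ u·y`: the ternary string with coordinate `x i` where `y i = false`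
and `u` where `y i = true`. -/
def mkU {ι : Type*} (x y : ι → Bool) : ι → TVal :=
  fun i => if y i then none else some (x i)

/-- Fix `(s,x)`. The hazard derivative `dMUX_n(s,x; ·, ·)` — which holds iff
`MUX_n` is non-constant on the resolutions of `(s,x) ⊕ u·(t,y)`, equivalently
`hfe (MUX n) (mkU w v) = none` — is a monotone Boolean function of `(t,y)`. -/
theorem stmt19 (n : ℕ) (w : (Fin n ⊕ (Fin n → Bool)) → Bool)
    (v v' : (Fin n ⊕ (Fin n → Bool)) → Bool)
    (hle : ∀ i, v i ≤ v' i)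
    (h : hfe (MUX n) (mkU w v) = none) :
    hfe (MUX n) (mkU w v') = none := by
  classical
  have hsub : ∀ a, isRes (mkU w v) a → isRes (mkU w v') a := by
    intro a ha i b hb
    apply ha
    simp only [mkU] at hb ⊢
    by_cases hv' : v' i
    · simp [hv'] at hb
    · have hv : v i = false := by
        cases hvi : v i
        · rfl
        · exact absurd (hle i) (by simp [hvi, hv'])
      simp [hv]
      simpa [hv'] using hb
  simp only [hfe] at h ⊢
  split_ifs at h with h1 h2
  push_neg at h1 h2
  obtain ⟨a, ha, hfa⟩ := h1
  obtain ⟨b, hb, hfb⟩ := h2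
  rw [if_neg, if_neg]
  · intro H
    exact hfb (H b (hsub b hb))
  · intro H
    exact hfa (by simpa using (H a (hsub a ha)))
end
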